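/- Let s ≥ 1, q ∈ (2s-1, 2s) a real number, N ≥ 1, η > 0, and let h, y₂, …, y_s : ℤ → ℂ be supported on {1,…,N}. Suppose ‖\widehat{h}‖_∞ ≤ ηN and ‖\widehat{h}‖_q, ‖\widehat{y_i}‖_q ≤ C N^{1-1/q} for all i, where ‖\widehat{f}‖_q = (∫₀¹|\widehat{f}(α)|^q dα)^{1/q}. Then for any subset A ⊆ {1,…,sN}, ∑_{n ∈ A} |(h * y₂ * ⋯ * y_s)(n)| ≤ |A|^{1/2} (ηN)^{s - q/2} C^{q/2} N^{(q-1)/2}. -/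

import Mathlib

/-- e(x) = e^{2πix}. -/
noncomputable def e (x : ℝ) : ℂ := Complex.exp (2 * Real.pi * Complex.I * x)

/-- Fourier transform of a finitely supported function on ℤ. -/
noncomputable def FT (f : ℤ → ℂ) (α : ℝ) : ℂ := ∑ᶠ n : ℤ, f n * e ((n : ℝ) * α)

/-- Convolution of functions on ℤ. -/
noncomputable def conv (f g : ℤ → ℂ) : ℤ → ℂ := fun n => ∑ᶠ m : ℤ, f m * g (n - m)

/-- Dirac delta at 0, the identity for convolution. -/
def delta0 : ℤ → ℂ := fun n => if n = 0 then 1 else 0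


lemma e_add (x y : ℝ) : e (x + y) = e x * e y := by
  simp [e, ← Complex.exp_add, mul_add]

lemma e_zero : e 0 = 1 := by simp [e]

lemma norm_e (x : ℝ) : ‖e x‖ = 1 := by
  simp [e, Complex.norm_exp]

lemma conj_e (x : ℝ) : (starRingEnd ℂ) (e x) = e (-x) := by
  simp [e, ← Complex.exp_conj]
  ring_nf
  rw [Complex.conj_ofNat]
  ring

lemma continuous_e : Continuous fun x : ℝ => e x := by
  unfold e; fun_prop

lemma FT_eq_sum {f : ℤ → ℂ} {S : Finset ℤ} (hf : Function.support f ⊆ S) (α : ℝ) :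
    FT f α = ∑ n ∈ S, f n * e ((n : ℝ) * α) := by
  apply finsum_eq_sum_of_support_subset
  intro n hn
  apply hf
  intro h
  simp [h] at hn

lemma conv_eq_sum {f : ℤ → ℂ} (g : ℤ → ℂ) {S : Finset ℤ} (hf : Function.support f ⊆ S) (n : ℤ) :
    conv f g n = ∑ m ∈ S, f m * g (n - m) := by
  apply finsum_eq_sum_of_support_subset
  intro m hm
  apply hf
  intro h
  simp [h] at hm

lemma support_conv {f g : ℤ → ℂ} {a b : ℤ}
    (hf : Function.support f ⊆ Set.Icc 0 a) (hg : Function.support g ⊆ Set.Icc 0 b) :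
    Function.support (conv f g) ⊆ Set.Icc 0 (a + b) := by
  intro n hn
  by_contra hn'
  apply hn
  unfold conv
  have : ∀ m : ℤ, f m * g (n - m) = 0 := by
    intro m
    by_cases hm : f m = 0
    · simp [hm]
    · have h1 := hf hm
      have h2 : g (n - m) = 0 := by
        by_contra h
        have := hg h
        simp only [Set.mem_Icc, Finset.mem_Icc] at h1 this hn'
        omega
      simp [h2]
  simp [this]

lemma FT_conv {f g : ℤ → ℂ} {a b : ℤ} (ha : 0 ≤ a) (hb : 0 ≤ b)
    (hf : Function.support f ⊆ Set.Icc 0 a) (hg : Function.support g ⊆ Set.Icc 0 b) (α : ℝ) :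
    FT (conv f g) α = FT f α * FT g α := by
  have hfS : Function.support f ⊆ (Finset.Icc (0:ℤ) a : Finset ℤ) := by
    simpa using hf
  have hgS : Function.support g ⊆ (Finset.Icc (0:ℤ) b : Finset ℤ) := by
    simpa using hg
  have hcS : Function.support (conv f g) ⊆ (Finset.Icc (0:ℤ) (a+b) : Finset ℤ) := by
    simpa using support_conv hf hg
  rw [FT_eq_sum hcS, FT_eq_sum hfS, FT_eq_sum hgS]
  have key : ∀ m ∈ Finset.Icc (0:ℤ) a,
      ∑ n ∈ Finset.Icc (0:ℤ) (a+b), g (n - m) * e ((n:ℝ) * α)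
        = e ((m:ℝ) * α) * ∑ k ∈ Finset.Icc (0:ℤ) b, g k * e ((k:ℝ) * α) := by
    intro m hm
    simp only [Finset.mem_Icc] at hm
    rw [Finset.mul_sum]
    have h1 : (Finset.Icc (0:ℤ) b).map (addLeftEmbedding m) ⊆ Finset.Icc 0 (a+b) := by
      intro x hx
      simp only [Finset.mem_map, addLeftEmbedding_apply, Finset.mem_Icc] at hx ⊢
      obtain ⟨k, hk, rfl⟩ := hx
      omega
    have h2 : ∀ x ∈ Finset.Icc (0:ℤ) (a+b),
        x ∉ (Finset.Icc (0:ℤ) b).map (addLeftEmbedding m) → g (x - m) * e ((x:ℝ) * α) = 0 := by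
      intro x _ hx'
      have hgx : g (x - m) = 0 := by
        by_contra h
        apply hx'
        have := hg h
        simp only [Set.mem_Icc] at this
        simp only [Finset.mem_map, addLeftEmbedding_apply]
        exact ⟨x - m, by simp only [Finset.mem_Icc]; omega, by ring⟩
      simp [hgx]
    rw [← Finset.sum_subset h1 h2, Finset.sum_map]
    apply Finset.sum_congr rfl
    intro k _
    simp only [addLeftEmbedding_apply, add_sub_cancel_left]
    push_cast
    rw [add_mul, e_add]
    ring
  calc ∑ n ∈ Finset.Icc (0:ℤ) (a+b), conv f g n * e ((n:ℝ) * α)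
      = ∑ n ∈ Finset.Icc (0:ℤ) (a+b), ∑ m ∈ Finset.Icc (0:ℤ) a,
          f m * (g (n - m) * e ((n:ℝ) * α)) := by
        apply Finset.sum_congr rfl
        intro n _
        rw [conv_eq_sum g hfS, Finset.sum_mul]
        simp [mul_assoc]
    _ = ∑ m ∈ Finset.Icc (0:ℤ) a, f m *
          ∑ n ∈ Finset.Icc (0:ℤ) (a+b), g (n - m) * e ((n:ℝ) * α) := by
        rw [Finset.sum_comm]
        simp [Finset.mul_sum]
    _ = ∑ m ∈ Finset.Icc (0:ℤ) a, f m *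
          (e ((m:ℝ) * α) * ∑ k ∈ Finset.Icc (0:ℤ) b, g k * e ((k:ℝ) * α)) := by
        apply Finset.sum_congr rfl
        intro m hm
        rw [key m hm]
    _ = _ := by
        rw [Finset.sum_mul]
        apply Finset.sum_congr rfl
        intro m _
        ring

lemma FT_delta0 (α : ℝ) : FT delta0 α = 1 := by
  unfold FT
  rw [finsum_eq_single _ (0 : ℤ)]
  · simp [delta0, e_zero]
  · intro x hx
    simp [delta0, hx]

lemma support_delta0 : Function.support delta0 ⊆ Set.Icc (0:ℤ) 0 := by
  intro n hn
  simp only [Function.mem_support, delta0, ne_eq, ite_eq_right_iff, not_forall] at hn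
  simp [hn.1]

lemma foldr_support (c : ℤ) (hc : 0 ≤ c) (l : List (ℤ → ℂ))
    (hl : ∀ f ∈ l, Function.support f ⊆ Set.Icc 0 c) :
    Function.support (l.foldr conv delta0) ⊆ Set.Icc 0 ((l.length : ℤ) * c) := by
  induction l with
  | nil => simpa using support_delta0
  | cons f l ih =>
    have h1 : Function.support (l.foldr conv delta0) ⊆ Set.Icc 0 ((l.length : ℤ) * c) :=
      ih fun g hg => hl g (List.mem_cons_of_mem f hg)
    have h2 := support_conv (hl f List.mem_cons_self) h1
    simp only [List.foldr_cons, List.length_cons]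
    convert h2 using 2
    push_cast
    ring

lemma FT_foldr (c : ℤ) (hc : 0 ≤ c) (l : List (ℤ → ℂ))
    (hl : ∀ f ∈ l, Function.support f ⊆ Set.Icc 0 c) (α : ℝ) :
    FT (l.foldr conv delta0) α = (l.map (fun f => FT f α)).prod := by
  induction l with
  | nil => simpa using FT_delta0 α
  | cons f l ih =>
    have h1 : Function.support (l.foldr conv delta0) ⊆ Set.Icc 0 ((l.length : ℤ) * c) :=
      foldr_support c hc l fun g hg => hl g (List.mem_cons_of_mem f hg)
    simp only [List.foldr_cons, List.map_cons, List.prod_cons]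
    rw [FT_conv hc (by positivity) (hl f List.mem_cons_self) h1 α,
      ih fun g hg => hl g (List.mem_cons_of_mem f hg)]

lemma continuous_e_mul (k : ℤ) : Continuous fun α : ℝ => e ((k:ℝ) * α) :=
  continuous_e.comp (continuous_const.mul continuous_id)

lemma integral_e (k : ℤ) :
    (∫ α in (0:ℝ)..1, e ((k:ℝ) * α)) = if k = 0 then 1 else 0 := by
  have hrw : ∀ α : ℝ, e ((k:ℝ) * α) = Complex.exp ((2 * Real.pi * Complex.I * k) * α) := by
    intro α
    unfold e
    push_cast
    ring_nf
  by_cases hk : k = 0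
  · simp [hk, e_zero]
  · have hc : (2 * (Real.pi:ℂ) * Complex.I * k) ≠ 0 := by
      simp [Real.pi_ne_zero, Complex.I_ne_zero, hk, Complex.ofReal_ne_zero]
    simp only [hrw]
    rw [integral_exp_mul_complex hc]
    have h1 : (2 * (Real.pi:ℂ) * Complex.I * k) * (1:ℝ) = (k:ℂ) * (2 * Real.pi * Complex.I) := by
      push_cast; ring
    have h2 : Complex.exp ((2 * (Real.pi:ℂ) * Complex.I * k) * (1:ℝ)) = 1 := by
      rw [h1, Complex.exp_int_mul_two_pi_mul_I]
    have h3 : Complex.exp (2 * (Real.pi:ℂ) * Complex.I * k) = 1 := by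
      rw [show (2 * (Real.pi:ℂ) * Complex.I * k) = (k:ℂ) * (2 * Real.pi * Complex.I) by ring]
      exact Complex.exp_int_mul_two_pi_mul_I k
    simp [h3, hk]

lemma continuous_FT {f : ℤ → ℂ} {S : Finset ℤ} (hf : Function.support f ⊆ S) :
    Continuous (FT f) := by
  have : FT f = fun α => ∑ n ∈ S, f n * e ((n:ℝ) * α) := funext fun α => FT_eq_sum hf α
  rw [this]
  exact continuous_finset_sum S fun n _ => continuous_const.mul (continuous_e_mul n)

lemma parseval {f : ℤ → ℂ} {S : Finset ℤ} (hf : Function.support f ⊆ S) :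
    (∫ α in (0:ℝ)..1, ‖FT f α‖ ^ 2) = ∑ n ∈ S, ‖f n‖ ^ 2 := by
  classical
  set c : ℤ → ℤ → ℂ := fun n m => f n * (starRingEnd ℂ) (f m) with hc
  have hG : ∀ α : ℝ, FT f α * (starRingEnd ℂ) (FT f α)
      = ∑ n ∈ S, ∑ m ∈ S, c n m * e (((n - m : ℤ) : ℝ) * α) := by
    intro α
    rw [FT_eq_sum hf, map_sum, Finset.sum_mul_sum]
    apply Finset.sum_congr rfl; intro n _
    apply Finset.sum_congr rfl; intro m _
    have hx : ((n - m : ℤ) : ℝ) * α = (n:ℝ) * α + (-((m:ℝ) * α)) := by push_cast; ring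
    rw [hx, e_add, map_mul, conj_e]
    simp only [hc]
    ring
  -- complex integral
  have hint : (∫ α in (0:ℝ)..1, FT f α * (starRingEnd ℂ) (FT f α))
      = ∑ n ∈ S, (‖f n‖ : ℂ) ^ 2 := by
    simp only [hG]
    rw [intervalIntegral.integral_finset_sum]
    · have : ∀ n ∈ S, (∫ α in (0:ℝ)..1, ∑ m ∈ S, c n m * e (((n - m : ℤ) : ℝ) * α))
          = (‖f n‖ : ℂ) ^ 2 := by
        intro n hn
        rw [intervalIntegral.integral_finset_sum]
        · have : ∀ m ∈ S, (∫ α in (0:ℝ)..1, c n m * e (((n - m : ℤ) : ℝ) * α))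
              = if n - m = 0 then c n m else 0 := by
            intro m _
            rw [intervalIntegral.integral_const_mul, integral_e]
            split <;> simp
          rw [Finset.sum_congr rfl this]
          simp only [sub_eq_zero]
          rw [Finset.sum_ite_eq S n (fun m => c n m)]
          simp only [hn, if_true, hc]
          rw [Complex.mul_conj]
          simp [Complex.normSq_eq_norm_sq]
        · exact fun m _ => (continuous_const.mul (continuous_e_mul _)).intervalIntegrable 0 1
      rw [Finset.sum_congr rfl this]
    · intro n _
      exact (continuous_finset_sum S fun m _ =>
        continuous_const.mul (continuous_e_mul _)).intervalIntegrable 0 1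
  -- finish: real integral via re
  have hGcont : Continuous fun α : ℝ => FT f α * (starRingEnd ℂ) (FT f α) :=
    (continuous_FT hf).mul (Complex.continuous_conj.comp (continuous_FT hf))
  have hGint : MeasureTheory.IntegrableOn
      (fun α : ℝ => FT f α * (starRingEnd ℂ) (FT f α)) (Set.Ioc 0 1) :=
    hGcont.integrableOn_Ioc
  have hnorm : ∀ α : ℝ, ‖FT f α‖ ^ 2 = (FT f α * (starRingEnd ℂ) (FT f α)).re := by
    intro α
    rw [Complex.mul_conj]
    simp [Complex.normSq_eq_norm_sq, ← Complex.ofReal_pow]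
  have h4 : (∫ α in Set.Ioc (0:ℝ) 1, FT f α * (starRingEnd ℂ) (FT f α))
      = ∑ n ∈ S, (‖f n‖ : ℂ) ^ 2 := by
    rw [← intervalIntegral.integral_of_le zero_le_one]
    exact hint
  calc (∫ α in (0:ℝ)..1, ‖FT f α‖ ^ 2)
      = ∫ α in Set.Ioc (0:ℝ) 1, (FT f α * (starRingEnd ℂ) (FT f α)).re := by
        rw [intervalIntegral.integral_of_le zero_le_one]
        exact MeasureTheory.setIntegral_congr_fun measurableSet_Ioc fun α _ => hnorm α
    _ = (∫ α in Set.Ioc (0:ℝ) 1, FT f α * (starRingEnd ℂ) (FT f α)).re :=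
        integral_re hGint
    _ = (∑ n ∈ S, ((‖f n‖ : ℂ) ^ 2)).re := by rw [h4]
    _ = ∑ n ∈ S, ‖f n‖ ^ 2 := by
        simp [← Complex.ofReal_pow]

lemma sum_weights (s : ℕ) (hs : 1 ≤ s) (q : ℝ) (hq : q ≠ 0) :
    ∑ i : Fin s, (if i = (⟨0, hs⟩ : Fin s) then (q - 2*((s:ℝ)-1))/q else 2/q) = 1 := by
  rw [← Finset.add_sum_erase _ _ (Finset.mem_univ (⟨0, hs⟩ : Fin s)), if_pos rfl,
    Finset.sum_congr rfl (fun i hi => if_neg (Finset.ne_of_mem_erase hi)),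
    Finset.sum_const, Finset.card_erase_of_mem (Finset.mem_univ _), nsmul_eq_mul]
  simp only [Finset.card_univ, Fintype.card_fin]
  have h1 : ((s - 1 : ℕ) : ℝ) = (s : ℝ) - 1 := by
    push_cast [Nat.cast_sub hs]
    ring
  rw [h1]
  field_simp
  ring

/-- Key Cauchy–Schwarz/Hölder estimate in the almost-all transference principle.
`F 0` plays the role of `h` and `F i`, `i ≠ 0`, the roles of `y₂, …, y_s`. -/
theorem transference_restriction_estimate (s N : ℕ) (hs : 1 ≤ s) (hN : 1 ≤ N)
    (q η C : ℝ) (hq1 : 2 * (s : ℝ) - 1 < q) (hq2 : q < 2 * (s : ℝ))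
    (hη : 0 < η) (hC : 0 < C)
    (F : Fin s → ℤ → ℂ) (hsupp : ∀ i n, F i n ≠ 0 → n ∈ Finset.Icc (1 : ℤ) N)
    (hinf : ∀ α : ℝ, ‖FT (F ⟨0, hs⟩) α‖ ≤ η * N)
    (hLq : ∀ i, (∫ α in (0 : ℝ)..1, ‖FT (F i) α‖ ^ q) ^ (1 / q) ≤ C * (N : ℝ) ^ (1 - 1 / q))
    (A : Finset ℤ) (hA : A ⊆ Finset.Icc (1 : ℤ) (s * N)) :
    ∑ n ∈ A, ‖(List.ofFn F).foldr conv delta0 n‖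
      ≤ (A.card : ℝ) ^ ((1 : ℝ) / 2) * (η * N) ^ ((s : ℝ) - q / 2)
        * C ^ (q / 2) * (N : ℝ) ^ ((q - 1) / 2) := by
  classical
  set i0 : Fin s := ⟨0, hs⟩ with hi0
  set g : ℤ → ℂ := (List.ofFn F).foldr conv delta0 with hg
  have hs1 : (1:ℝ) ≤ (s:ℝ) := by exact_mod_cast hs
  have hN1 : (1:ℝ) ≤ (N:ℝ) := by exact_mod_cast hN
  have hq0 : (0:ℝ) < q := by nlinarith
  have h2sq : (0:ℝ) ≤ 2*(s:ℝ) - q := by linarith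
  have hqs : (0:ℝ) < q - 2*((s:ℝ) - 1) := by linarith
  have hηN : (0:ℝ) < η * N := by positivity
  -- supports
  have hFsupp : ∀ i : Fin s, Function.support (F i) ⊆ Set.Icc (0:ℤ) (N:ℤ) := by
    intro i n hn
    have := hsupp i n hn
    simp only [Finset.mem_Icc] at this
    simp only [Set.mem_Icc]
    omega
  have hFS : ∀ i : Fin s, Function.support (F i) ⊆ ↑(Finset.Icc (0:ℤ) (N:ℤ)) := by
    intro i; simpa using hFsupp i
  have hl : ∀ f ∈ List.ofFn F, Function.support f ⊆ Set.Icc (0:ℤ) (N:ℤ) := by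
    intro f hf
    rw [List.mem_ofFn] at hf
    obtain ⟨i, rfl⟩ := hf
    exact hFsupp i
  have hgsupp : Function.support g ⊆ Set.Icc (0:ℤ) ((s:ℤ) * N) := by
    have h := foldr_support (N:ℤ) (by positivity) (List.ofFn F) hl
    rwa [List.length_ofFn] at h
  set T : Finset ℤ := A ∪ Finset.Icc (0:ℤ) ((s:ℤ)*N) with hT
  have hgT : Function.support g ⊆ ↑T := by
    refine subset_trans hgsupp ?_
    intro x hx
    simp only [hT, Finset.coe_union, Set.mem_union, Finset.coe_Icc]
    exact Or.inr hx
  -- FT product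
  have hFTg : ∀ α : ℝ, FT g α = ∏ i : Fin s, FT (F i) α := by
    intro α
    rw [hg, FT_foldr (N:ℤ) (by positivity) (List.ofFn F) hl α]
    simp [List.map_ofFn, List.prod_ofFn, Function.comp]
  set u : Fin s → ℝ → ℝ := fun i α => ‖FT (F i) α‖ with hu
  have hu_cont : ∀ i, Continuous (u i) := fun i => (continuous_FT (hFS i)).norm
  have hu_nn : ∀ i α, 0 ≤ u i α := fun i α => norm_nonneg _
  set I : ℝ := ∫ α in (0:ℝ)..1, ‖FT g α‖ ^ 2 with hI
  have hpars : I = ∑ n ∈ T, ‖g n‖ ^ 2 := parseval hgT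
  -- Cauchy–Schwarz
  have hCS : (∑ n ∈ A, ‖g n‖) ^ 2 ≤ (A.card : ℝ) * I := by
    have h1 := Finset.sum_mul_sq_le_sq_mul_sq A (fun _ => (1:ℝ)) (fun n => ‖g n‖)
    simp only [one_mul, one_pow, Finset.sum_const, nsmul_eq_mul, mul_one] at h1
    have h2 : ∑ n ∈ A, ‖g n‖ ^ 2 ≤ ∑ n ∈ T, ‖g n‖ ^ 2 :=
      Finset.sum_le_sum_of_subset_of_nonneg Finset.subset_union_left
        (fun n _ _ => sq_nonneg _)
    rw [hpars]
    calc (∑ n ∈ A, ‖g n‖) ^ 2 ≤ (A.card : ℝ) * ∑ n ∈ A, ‖g n‖ ^ 2 := h1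
      _ ≤ (A.card : ℝ) * ∑ n ∈ T, ‖g n‖ ^ 2 := by
          apply mul_le_mul_of_nonneg_left h2 (by positivity)
  set B : ℝ := C ^ q * (N:ℝ) ^ (q - 1) with hB
  have hB0 : 0 < B := by positivity
  set D : ℝ := (η * N) ^ (2*(s:ℝ) - q) * B with hD
  have hD0 : 0 < D := by positivity
  have hID : I ≤ D := by
    set μ := MeasureTheory.volume.restrict (Set.Ioc (0:ℝ) 1) with hμ
    set p : Fin s → ℝ := fun i => if i = i0 then (q - 2*((s:ℝ)-1))/q else 2/q with hp
    have hp_nn : ∀ i, 0 ≤ p i := by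
      intro i
      by_cases h : i = i0 <;> simp only [hp, h, if_pos, if_neg, if_true] <;> positivity
    have hp_sum : ∑ i : Fin s, p i = 1 := sum_weights s hs q hq0.ne'
    -- pointwise bound
    have hpoint : ∀ α : ℝ, (∏ i : Fin s, (u i α)^2)
        ≤ (η*N)^(2*(s:ℝ)-q) * ∏ i : Fin s, ((u i α)^q)^(p i) := by
      intro α
      have hrw : ∀ i, ((u i α)^q)^(p i) = (u i α) ^ (q * p i) :=
        fun i => (Real.rpow_mul (hu_nn i α) q (p i)).symm
      have hL : (∏ i : Fin s, (u i α)^2)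
          = (u i0 α)^2 * ∏ i ∈ Finset.univ.erase i0, (u i α)^2 :=
        (Finset.mul_prod_erase Finset.univ _ (Finset.mem_univ i0)).symm
      have hR : (∏ i : Fin s, ((u i α)^q)^(p i))
          = (u i0 α)^(q - 2*((s:ℝ)-1)) * ∏ i ∈ Finset.univ.erase i0, (u i α)^2 := by
        rw [← Finset.mul_prod_erase Finset.univ _ (Finset.mem_univ i0), hrw]
        congr 1
        · congr 1
          simp only [hp, if_pos rfl]
          field_simp
        · apply Finset.prod_congr rfl
          intro i hi
          rw [hrw i]
          have : q * p i = 2 := by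
            simp only [hp, if_neg (Finset.ne_of_mem_erase hi)]
            field_simp
          rw [this]
          rw [show ((2:ℝ)) = ((2:ℕ):ℝ) by norm_num, Real.rpow_natCast]
      rw [hL, hR, ← mul_assoc]
      apply mul_le_mul_of_nonneg_right _ (Finset.prod_nonneg fun i _ => sq_nonneg _)
      have hsplit : (u i0 α)^2 = (u i0 α)^(2*(s:ℝ)-q) * (u i0 α)^(q - 2*((s:ℝ)-1)) := by
        rw [← Real.rpow_add' (hu_nn i0 α) (by rw [show (2*(s:ℝ)-q) + (q - 2*((s:ℝ)-1)) = 2 by ring]; norm_num)]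
        rw [show (2*(s:ℝ)-q) + (q - 2*((s:ℝ)-1)) = ((2:ℕ):ℝ) by push_cast; ring,
          Real.rpow_natCast]
      rw [hsplit]
      apply mul_le_mul_of_nonneg_right _ (Real.rpow_nonneg (hu_nn i0 α) _)
      exact Real.rpow_le_rpow (hu_nn i0 α) (hinf α) h2sq
    -- continuity facts
    have hviq_cont : ∀ i, Continuous fun α => (u i α)^q :=
      fun i => (hu_cont i).rpow_const (fun α => Or.inr hq0.le)
    have hw_cont : Continuous fun α => ∏ i : Fin s, (u i α)^2 :=
      continuous_finset_prod _ (fun i _ => (hu_cont i).pow 2)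
    have hw_nn : ∀ α, 0 ≤ ∏ i : Fin s, (u i α)^2 :=
      fun α => Finset.prod_nonneg fun i _ => sq_nonneg _
    have hIw : I = ∫ α in (0:ℝ)..1, ∏ i : Fin s, (u i α)^2 := by
      rw [hI]
      apply intervalIntegral.integral_congr
      intro α _
      show ‖FT g α‖ ^ 2 = ∏ i : Fin s, u i α ^ 2
      rw [hFTg α, norm_prod, ← Finset.prod_pow]
    -- per-i lintegrals
    have hlint_i : ∀ i, (∫⁻ α, ENNReal.ofReal ((u i α)^q) ∂μ)
        = ENNReal.ofReal (∫ α in (0:ℝ)..1, (u i α)^q) := by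
      intro i
      rw [intervalIntegral.integral_of_le zero_le_one, hμ]
      exact (MeasureTheory.ofReal_integral_eq_lintegral_ofReal
        ((hviq_cont i).integrableOn_Ioc)
        (MeasureTheory.ae_of_all _ fun α => Real.rpow_nonneg (hu_nn i α) q)).symm
    have hB_i : ∀ i, (∫ α in (0:ℝ)..1, (u i α)^q) ≤ B := by
      intro i
      have h0 : 0 ≤ ∫ α in (0:ℝ)..1, (u i α)^q :=
        intervalIntegral.integral_nonneg zero_le_one
          (fun α _ => Real.rpow_nonneg (hu_nn i α) q)
      have h1 := hLq i
      have h2 : ((∫ α in (0:ℝ)..1, (u i α)^q) ^ (1/q)) ^ q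
          ≤ (C * (N:ℝ) ^ (1 - 1/q)) ^ q :=
        Real.rpow_le_rpow (Real.rpow_nonneg h0 _) h1 hq0.le
      rw [← Real.rpow_mul h0, one_div_mul_cancel hq0.ne', Real.rpow_one] at h2
      calc (∫ α in (0:ℝ)..1, (u i α)^q) ≤ (C * (N:ℝ) ^ (1 - 1/q)) ^ q := h2
        _ = B := by
          rw [Real.mul_rpow hC.le (Real.rpow_nonneg (by positivity) _),
            ← Real.rpow_mul (by positivity : (0:ℝ) ≤ (N:ℝ))]
          rw [hB, show (1 - 1/q) * q = q - 1 by field_simp]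
    -- measurability
    have hvmeas : ∀ i, AEMeasurable (fun α => ENNReal.ofReal ((u i α)^q)) μ :=
      fun i => ((ENNReal.continuous_ofReal.comp (hviq_cont i)).measurable).aemeasurable
    have hholder := ENNReal.lintegral_prod_norm_pow_le (μ := μ) Finset.univ
      (fun i _ => hvmeas i) hp_sum (fun i _ => hp_nn i)
    have hofI : ENNReal.ofReal I ≤ ENNReal.ofReal D := by
      have hE : ENNReal.ofReal ((η*(N:ℝ))^(2*(s:ℝ)-q)) ≠ ⊤ := ENNReal.ofReal_ne_top
      calc ENNReal.ofReal I
          = ∫⁻ α, ENNReal.ofReal (∏ i : Fin s, (u i α)^2) ∂μ := by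
            rw [hIw, intervalIntegral.integral_of_le zero_le_one, hμ]
            exact MeasureTheory.ofReal_integral_eq_lintegral_ofReal
              hw_cont.integrableOn_Ioc (MeasureTheory.ae_of_all _ hw_nn)
        _ ≤ ∫⁻ α, ENNReal.ofReal ((η*(N:ℝ))^(2*(s:ℝ)-q))
              * ∏ i : Fin s, (ENNReal.ofReal ((u i α)^q))^(p i) ∂μ := by
            apply MeasureTheory.lintegral_mono
            intro α
            calc ENNReal.ofReal (∏ i : Fin s, (u i α)^2)
                ≤ ENNReal.ofReal ((η*(N:ℝ))^(2*(s:ℝ)-q) * ∏ i : Fin s, ((u i α)^q)^(p i)) :=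
                  ENNReal.ofReal_le_ofReal (hpoint α)
              _ = ENNReal.ofReal ((η*(N:ℝ))^(2*(s:ℝ)-q))
                  * ∏ i : Fin s, (ENNReal.ofReal ((u i α)^q))^(p i) := by
                  rw [ENNReal.ofReal_mul (Real.rpow_nonneg hηN.le _),
                    ENNReal.ofReal_prod_of_nonneg
                      (fun i _ => Real.rpow_nonneg (Real.rpow_nonneg (hu_nn i α) q) _)]
                  congr 1
                  exact Finset.prod_congr rfl fun i _ =>
                    (ENNReal.ofReal_rpow_of_nonneg (Real.rpow_nonneg (hu_nn i α) q) (hp_nn i)).symm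
        _ = ENNReal.ofReal ((η*(N:ℝ))^(2*(s:ℝ)-q))
              * ∫⁻ α, ∏ i : Fin s, (ENNReal.ofReal ((u i α)^q))^(p i) ∂μ :=
            MeasureTheory.lintegral_const_mul' _ _ hE
        _ ≤ ENNReal.ofReal ((η*(N:ℝ))^(2*(s:ℝ)-q))
              * ∏ i : Fin s, (∫⁻ α, ENNReal.ofReal ((u i α)^q) ∂μ)^(p i) :=
            mul_le_mul_right hholder _
        _ ≤ ENNReal.ofReal ((η*(N:ℝ))^(2*(s:ℝ)-q))
              * ∏ i : Fin s, (ENNReal.ofReal B)^(p i) := by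
            apply mul_le_mul_right
            apply Finset.prod_le_prod'
            intro i _
            apply ENNReal.rpow_le_rpow _ (hp_nn i)
            rw [hlint_i i]
            exact ENNReal.ofReal_le_ofReal (hB_i i)
        _ = ENNReal.ofReal D := by
            have h3 : ∏ i : Fin s, (ENNReal.ofReal B)^(p i)
                = ENNReal.ofReal B := by
              rw [Finset.prod_congr rfl fun i _ =>
                (ENNReal.ofReal_rpow_of_nonneg hB0.le (hp_nn i)),
                ← ENNReal.ofReal_prod_of_nonneg
                  (fun i _ => Real.rpow_nonneg hB0.le _),
                ← Real.rpow_sum_of_pos hB0 p Finset.univ, hp_sum, Real.rpow_one]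
            rw [h3, hD, ENNReal.ofReal_mul (Real.rpow_nonneg hηN.le _)]
    have hI0 : 0 ≤ I := by
      rw [hI]
      exact intervalIntegral.integral_nonneg zero_le_one (fun α _ => sq_nonneg _)
    have := (ENNReal.ofReal_le_ofReal_iff hD0.le).mp hofI
    exact this
  -- final assembly
  have hsA : 0 ≤ ∑ n ∈ A, ‖g n‖ := Finset.sum_nonneg fun n _ => norm_nonneg _
  have hfin : (∑ n ∈ A, ‖g n‖) ^ 2 ≤ (A.card : ℝ) * D :=
    le_trans hCS (mul_le_mul_of_nonneg_left hID (by positivity))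
  have hsqrt := Real.sqrt_le_sqrt hfin
  rw [Real.sqrt_sq hsA] at hsqrt
  refine le_trans hsqrt ?_
  rw [Real.sqrt_mul (by positivity) D, hD, Real.sqrt_mul (by positivity) B, hB,
    Real.sqrt_mul (by positivity), Real.sqrt_eq_rpow, Real.sqrt_eq_rpow, Real.sqrt_eq_rpow,
    Real.sqrt_eq_rpow]
  rw [← Real.rpow_mul hηN.le, ← Real.rpow_mul hC.le, ← Real.rpow_mul (by positivity)]
  rw [show (2*(s:ℝ) - q) * (1/2) = (s:ℝ) - q/2 by ring,
    show q * (1/2) = q/2 by ring, show (q-1) * (1/2) = (q-1)/2 by ring]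
  ring_nf
  exact le_rfl
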